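/- Let N ≥ 1 and let ũ ∈ ℝ^N have all entries nonzero. Then the N×N symmetric tridiagonal matrix L̃⁻ satisfies L̃⁻ũ = 0; moreover 0 is a simple eigenvalue of L̃⁻ (a simple root of its characteristic polynomial), L̃⁻ has exactly N₀(ũ) negative eigenvalues counted with multiplicity, and exactly N − N₀(ũ) − 1 positive eigenvalues counted with multiplicity. -/

import Mathlib

/-- Extension of a vector `Fin N → ℝ` to `ℤ` by zero (0-indexed). -/
def extZ (N : ℕ) (ut : Fin N → ℝ) : ℤ → ℝ :=
  fun k => if h : 0 ≤ k ∧ k < (N : ℤ) then ut ⟨k.toNat, by omega⟩ else 0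

/-- The `N×N` symmetric tridiagonal matrix `L̃⁻` with diagonal entries
`(ũ_{n−1} + ũ_{n+1})/ũ_n` (with the convention `ũ₀ = ũ_{N+1} = 0`) and `−1` on the
sub- and super-diagonal. -/
noncomputable def Lminus (N : ℕ) (ut : Fin N → ℝ) : Matrix (Fin N) (Fin N) ℝ :=
  fun i j =>
    if i = j then (extZ N ut (((i : ℕ) : ℤ) - 1) + extZ N ut (((i : ℕ) : ℤ) + 1)) / ut i
    else if (((i : ℕ) : ℤ) - ((j : ℕ) : ℤ)).natAbs = 1 then -1 else 0

/-- The number `N₀(ũ)` of sign alternations of `ũ`. -/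
noncomputable def nFlips (N : ℕ) (ut : Fin N → ℝ) : ℕ :=
  ((Finset.range (N - 1)).filter
    (fun i => (if h : i < N then ut ⟨i, h⟩ else 0) *
              (if h : i + 1 < N then ut ⟨i + 1, h⟩ else 0) < 0)).card


open Matrix Finset

variable (N : ℕ) (ut : Fin N → ℝ)

noncomputable def Qmat : Matrix (Fin N) (Fin N) ℝ :=
  fun k j => if j = k then (ut k)⁻¹ else if (j : ℕ) = (k : ℕ) + 1 then -(ut j)⁻¹ else 0

noncomputable def cvec : Fin N → ℝ :=
  fun k => ut k * extZ N ut (((k : ℕ) : ℤ) + 1)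

lemma extZ_coe (i : Fin N) : extZ N ut ((i : ℕ) : ℤ) = ut i := by
  have h : (0 : ℤ) ≤ (i : ℕ) ∧ ((i : ℕ) : ℤ) < (N : ℤ) := by
    constructor <;> [positivity; exact_mod_cast i.2]
  rw [extZ, dif_pos h]
  congr 1

lemma extZ_of_neg {k : ℤ} (hk : k < 0) : extZ N ut k = 0 := by
  rw [extZ, dif_neg (by omega)]

lemma extZ_of_ge {k : ℤ} (hk : (N : ℤ) ≤ k) : extZ N ut k = 0 := by
  rw [extZ, dif_neg (by omega)]

lemma Lminus_eq_conj (hut : ∀ n, ut n ≠ 0) :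
    Lminus N ut = (Qmat N ut)ᵀ * Matrix.diagonal (cvec N ut) * Qmat N ut := by
  ext i j
  rw [Matrix.mul_assoc, Matrix.mul_apply]
  have hdm : ∀ k, (Matrix.diagonal (cvec N ut) * Qmat N ut) k j
      = cvec N ut k * Qmat N ut k j := fun k => by rw [Matrix.diagonal_mul]
  simp only [Matrix.transpose_apply, hdm]
  set f : Fin N → ℝ := fun k => Qmat N ut k i * (cvec N ut k * Qmat N ut k j) with hf
  show Lminus N ut i j = ∑ k, f k
  have hQ0 : ∀ k : Fin N, k ≠ i → (i : ℕ) ≠ (k : ℕ) + 1 → f k = 0 := by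
    intro k h1 h2
    have : Qmat N ut k i = 0 := by
      rw [Qmat, if_neg (fun h => h1 h.symm), if_neg h2]
    simp [hf, this]
  have hQki : ∀ k : Fin N, Qmat N ut k i = 0 ∨ k = i ∨ (i : ℕ) = (k : ℕ) + 1 := by
    intro k
    by_cases h1 : k = i
    · right; left; exact h1
    · by_cases h2 : (i : ℕ) = (k : ℕ) + 1
      · right; right; exact h2
      · left
        rw [Qmat, if_neg (fun h => h1 h.symm), if_neg h2]
  by_cases hi0 : (i : ℕ) = 0
  · have hsum : ∑ k, f k = f i :=
      Finset.sum_eq_single_of_mem i (mem_univ i) (fun k _ hk => hQ0 k hk (by omega))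
    rw [hsum]
    simp only [hf]
    have hQii : Qmat N ut i i = (ut i)⁻¹ := if_pos rfl
    by_cases hji : j = i
    · subst hji
      have h1 : extZ N ut (((j : ℕ) : ℤ) - 1) = 0 := extZ_of_neg N ut (by omega)
      rw [Lminus, if_pos rfl, h1, hQii, cvec]
      have h2 := hut j
      field_simp
      ring
    · by_cases hj1 : (j : ℕ) = (i : ℕ) + 1
      · have hE : extZ N ut (((i : ℕ) : ℤ) + 1) = ut j := by
          have : ((i : ℕ) : ℤ) + 1 = ((j : ℕ) : ℤ) := by omega
          rw [this, extZ_coe]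
        have hQij : Qmat N ut i j = -(ut j)⁻¹ := by
          rw [Qmat, if_neg hji, if_pos hj1]
        have hci : cvec N ut i = ut i * ut j := by rw [cvec, hE]
        rw [Lminus, if_neg (fun h => hji h.symm), if_pos (by omega), hQii, hQij, hci]
        have h2 := hut i
        have h3 := hut j
        field_simp
      · have hQij : Qmat N ut i j = 0 := by
          rw [Qmat, if_neg hji, if_neg hj1]
        rw [Lminus, if_neg (fun h => hji h.symm),
          if_neg (by rw [Fin.ext_iff] at hji; omega), hQij]
        ring
  · have hipN : (i : ℕ) - 1 < N := by omega
    set ip : Fin N := ⟨(i : ℕ) - 1, hipN⟩ with hip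
    have hipv : (ip : ℕ) + 1 = (i : ℕ) := by show (i : ℕ) - 1 + 1 = (i : ℕ); omega
    have hne : ip ≠ i := fun h => by rw [h] at hipv; omega
    have hsum : ∑ k, f k = f ip + f i := by
      rw [← Finset.sum_pair hne]
      refine (Finset.sum_subset (Finset.subset_univ _) ?_).symm
      intro k _ hk
      simp only [Finset.mem_insert, Finset.mem_singleton] at hk
      push_neg at hk
      refine hQ0 k hk.2 (fun h => hk.1 ?_)
      rw [Fin.ext_iff]
      omega
    have hQii : Qmat N ut i i = (ut i)⁻¹ := if_pos rfl
    have hQipi : Qmat N ut ip i = -(ut i)⁻¹ := by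
      rw [Qmat, if_neg (fun h => hne h.symm), if_pos hipv.symm]
    have hcip : cvec N ut ip = ut ip * ut i := by
      rw [cvec]
      congr 1
      have : ((ip : ℕ) : ℤ) + 1 = ((i : ℕ) : ℤ) := by omega
      rw [this, extZ_coe]
    rw [hsum]
    simp only [hf]
    by_cases hji : j = i
    · subst hji
      have h1 : extZ N ut (((j : ℕ) : ℤ) - 1) = ut ip := by
        have : ((j : ℕ) : ℤ) - 1 = ((ip : ℕ) : ℤ) := by omega
        rw [this, extZ_coe]
      rw [Lminus, if_pos rfl, h1, hQii, hQipi, hcip, cvec]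
      have h2 := hut j
      field_simp
    · by_cases hj1 : (j : ℕ) = (i : ℕ) + 1
      · have hE : extZ N ut (((i : ℕ) : ℤ) + 1) = ut j := by
          have : ((i : ℕ) : ℤ) + 1 = ((j : ℕ) : ℤ) := by omega
          rw [this, extZ_coe]
        have hQij : Qmat N ut i j = -(ut j)⁻¹ := by
          rw [Qmat, if_neg hji, if_pos hj1]
        have hQipj : Qmat N ut ip j = 0 := by
          rw [Qmat, if_neg (by rw [Fin.ext_iff]; omega), if_neg (by omega)]
        have hci : cvec N ut i = ut i * ut j := by rw [cvec, hE]
        rw [Lminus, if_neg (fun h => hji h.symm), if_pos (by omega), hQii, hQij, hQipj, hci]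
        have h2 := hut i
        have h3 := hut j
        field_simp
        ring
      · by_cases hj2 : (i : ℕ) = (j : ℕ) + 1
        · have hjip : j = ip := by rw [Fin.ext_iff]; omega
          have hQij : Qmat N ut i j = 0 := by
            rw [Qmat, if_neg hji, if_neg hj1]
          have hQipj : Qmat N ut ip j = (ut ip)⁻¹ := by
            rw [Qmat, if_pos hjip]
          rw [Lminus, if_neg (fun h => hji h.symm), if_pos (by omega), hQij, hQipj, hcip,
            hQipi]
          have h2 := hut ip
          have h3 := hut i
          field_simp
          ring
        · have hQij : Qmat N ut i j = 0 := by
            rw [Qmat, if_neg hji, if_neg hj1]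
          have hQipj : Qmat N ut ip j = 0 := by
            rw [Qmat, if_neg (by rw [Fin.ext_iff] at hji ⊢; omega),
              if_neg (by rw [Fin.ext_iff] at hji; omega)]
          rw [Lminus, if_neg (fun h => hji h.symm),
            if_neg (by rw [Fin.ext_iff] at hji; omega), hQij, hQipj]
          ring

lemma Qmat_det_isUnit (hut : ∀ n, ut n ≠ 0) : IsUnit (Qmat N ut).det := by
  have hbt : (Qmat N ut).BlockTriangular id := by
    intro i j hij
    have : (j : ℕ) < (i : ℕ) := hij
    rw [Qmat, if_neg (by rw [Fin.ext_iff]; omega), if_neg (by omega)]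
  rw [Matrix.det_of_upperTriangular hbt]
  rw [isUnit_iff_ne_zero]
  apply Finset.prod_ne_zero_iff.mpr
  intro i _
  show Qmat N ut i i ≠ 0
  rw [Qmat, if_pos rfl]
  exact inv_ne_zero (hut i)

lemma quad_of_conj {n : ℕ} (A Q : Matrix (Fin n) (Fin n) ℝ) (c : Fin n → ℝ)
    (h : A = Qᵀ * Matrix.diagonal c * Q) (v : Fin n → ℝ) :
    v ⬝ᵥ A.mulVec v = ∑ k, c k * (Q.mulVec v k) ^ 2 := by
  rw [h, ← Matrix.mulVec_mulVec, ← Matrix.mulVec_mulVec, Matrix.dotProduct_mulVec,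
    Matrix.vecMul_transpose]
  rw [dotProduct]
  apply Finset.sum_congr rfl
  intro k _
  rw [Matrix.mulVec_diagonal]
  ring

lemma cvec_eq (k : Fin N) :
    cvec N ut k = if h : (k : ℕ) + 1 < N then ut k * ut ⟨(k : ℕ) + 1, h⟩ else 0 := by
  rw [cvec]
  split
  · rename_i h
    congr 1
    have he : ((k : ℕ) : ℤ) + 1 = (((⟨(k : ℕ) + 1, h⟩ : Fin N) : ℕ) : ℤ) := by simp
    rw [he, extZ_coe]
  · rename_i h
    rw [extZ_of_ge N ut (by omega), mul_zero]

lemma Lminus_mulVec (hut : ∀ n, ut n ≠ 0) : (Lminus N ut).mulVec ut = 0 := by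
  rw [Lminus_eq_conj N ut hut, ← Matrix.mulVec_mulVec, ← Matrix.mulVec_mulVec]
  have h0 : (Matrix.diagonal (cvec N ut)).mulVec ((Qmat N ut).mulVec ut) = 0 := by
    funext k
    rw [Matrix.mulVec_diagonal]
    by_cases hk : (k : ℕ) + 1 < N
    · set k' : Fin N := ⟨(k : ℕ) + 1, hk⟩ with hk'
      have hne : k ≠ k' := fun h => by
        have : (k : ℕ) = (k : ℕ) + 1 := congrArg Fin.val h
        omega
      have hQv : (Qmat N ut).mulVec ut k = 0 := by
        rw [Matrix.mulVec, dotProduct]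
        have hss : ∑ j ∈ ({k, k'} : Finset (Fin N)), Qmat N ut k j * ut j
            = ∑ j, Qmat N ut k j * ut j := by
          refine Finset.sum_subset (Finset.subset_univ _) ?_
          intro j _ hj
          simp only [Finset.mem_insert, Finset.mem_singleton] at hj
          push_neg at hj
          have : Qmat N ut k j = 0 := by
            rw [Qmat, if_neg hj.1, if_neg (fun h => hj.2 (by rw [Fin.ext_iff]; exact h))]
          rw [this, zero_mul]
        have hQkk : Qmat N ut k k = (ut k)⁻¹ := if_pos rfl
        have hQkk' : Qmat N ut k k' = -(ut k')⁻¹ := by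
          rw [Qmat, if_neg hne.symm, if_pos (by rfl)]
        rw [← hss, Finset.sum_pair hne, hQkk, hQkk']
        have h1 := hut k
        have h2 := hut k'
        field_simp
        ring
      rw [hQv, mul_zero]
      rfl
    · rw [cvec_eq, dif_neg hk, zero_mul]
      rfl
  rw [h0, Matrix.mulVec_zero]

lemma tri_count {n : ℕ} (d : Fin n → ℝ) :
    (Finset.univ.filter (fun i => 0 < d i)).card
      + (Finset.univ.filter (fun i => d i < 0)).card
      + (Finset.univ.filter (fun i => d i = 0)).card = n := by
  classical
  have h1 := Finset.card_filter_add_card_filter_not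
    (s := (Finset.univ : Finset (Fin n))) (p := fun i => 0 < d i)
  have h2 := Finset.card_filter_add_card_filter_not
    (s := Finset.univ.filter (fun i : Fin n => ¬ 0 < d i)) (p := fun i => d i < 0)
  rw [Finset.filter_filter, Finset.filter_filter] at h2
  have e1 : Finset.univ.filter (fun i : Fin n => ¬ 0 < d i ∧ d i < 0)
      = Finset.univ.filter (fun i => d i < 0) := by
    apply Finset.filter_congr
    intro i _
    constructor
    · exact fun h => h.2
    · exact fun h => ⟨by linarith, h⟩
  have e2 : Finset.univ.filter (fun i : Fin n => ¬ 0 < d i ∧ ¬ d i < 0)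
      = Finset.univ.filter (fun i => d i = 0) := by
    apply Finset.filter_congr
    intro i _
    constructor
    · exact fun h => le_antisymm (not_lt.mp h.1) (not_lt.mp h.2)
    · exact fun h => ⟨by simp [h], by simp [h]⟩
  rw [e1, e2] at h2
  rw [Finset.card_univ, Fintype.card_fin] at h1
  omega

lemma cvec_neg_card :
    (Finset.univ.filter (fun k => cvec N ut k < 0)).card = nFlips N ut := by
  rw [nFlips]
  apply Finset.card_bij' (fun (k : Fin N) _ => (k : ℕ))
    (fun m hm => ⟨m, by
      simp only [Finset.mem_filter, Finset.mem_range] at hm; omega⟩)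
  case hi =>
    intro k hk
    simp only [Finset.mem_filter, Finset.mem_univ, true_and] at hk
    rw [cvec_eq] at hk
    by_cases h : (k : ℕ) + 1 < N
    · rw [dif_pos h] at hk
      simp only [Finset.mem_filter, Finset.mem_range]
      refine ⟨by omega, ?_⟩
      rw [dif_pos (by omega : (k : ℕ) < N), dif_pos h]
      simpa using hk
    · rw [dif_neg h] at hk
      simp at hk
  case hj =>
    intro m hm
    simp only [Finset.mem_filter, Finset.mem_range] at hm
    obtain ⟨hm1, hm2⟩ := hm
    rw [dif_pos (by omega : m < N), dif_pos (by omega : m + 1 < N)] at hm2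
    simp only [Finset.mem_filter, Finset.mem_univ, true_and]
    rw [cvec_eq, dif_pos (by show m + 1 < N; omega :
      ((⟨m, by omega⟩ : Fin N) : ℕ) + 1 < N)]
    simpa using hm2
  case left_inv =>
    intro k _
    exact Fin.ext rfl
  case right_inv =>
    intro m _
    rfl

lemma cvec_zero_card (hN : 1 ≤ N) (hut : ∀ n, ut n ≠ 0) :
    (Finset.univ.filter (fun k => cvec N ut k = 0)).card = 1 := by
  have hfe : Finset.univ.filter (fun k => cvec N ut k = 0)
      = {(⟨N - 1, by omega⟩ : Fin N)} := by
    ext k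
    simp only [Finset.mem_filter, Finset.mem_univ, true_and, Finset.mem_singleton]
    constructor
    · intro hk
      rw [cvec_eq] at hk
      by_cases h : (k : ℕ) + 1 < N
      · rw [dif_pos h] at hk
        exact absurd hk (mul_ne_zero (hut _) (hut _))
      · rw [Fin.ext_iff]
        show (k : ℕ) = N - 1
        have := k.2
        omega
    · intro hk
      subst hk
      rw [cvec_eq, dif_neg (by show ¬ (N - 1 + 1 < N); omega)]
  rw [hfe, Finset.card_singleton]

open Matrix Finset in
lemma sylv_le {n : ℕ} (a b : Fin n → ℝ) (P : Matrix (Fin n) (Fin n) ℝ)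
    (h : ∀ x : Fin n → ℝ, ∑ i, a i * x i ^ 2 = ∑ i, b i * (P.mulVec x i) ^ 2) :
    (univ.filter (fun i => 0 < a i)).card ≤ (univ.filter (fun i => 0 < b i)).card := by
  classical
  set A := {i // 0 < a i}
  set B := {i // 0 < b i}
  -- extension by zero
  let ext : (A → ℝ) →ₗ[ℝ] (Fin n → ℝ) :=
    { toFun := fun x i => if h : 0 < a i then x ⟨i, h⟩ else 0
      map_add' := by intro x y; funext i; by_cases h : 0 < a i <;> simp [h]
      map_smul' := by intro c x; funext i; by_cases h : 0 < a i <;> simp [h] }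
  let φ : (A → ℝ) →ₗ[ℝ] (B → ℝ) :=
    { toFun := fun x j => P.mulVec (ext x) j.1
      map_add' := by intro x y; funext j; simp [Matrix.mulVec_add]
      map_smul' := by intro c x; funext j; simp [Matrix.mulVec_smul] }
  have hinj : Function.Injective φ := by
    rw [← LinearMap.ker_eq_bot, LinearMap.ker_eq_bot']
    intro x hx
    have hxz : ∀ j : B, P.mulVec (ext x) j.1 = 0 := fun j => congrFun hx j
    have h1 := h (ext x)
    have hrhs : ∑ i, b i * (P.mulVec (ext x) i) ^ 2 ≤ 0 := by
      apply Finset.sum_nonpos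
      intro i _
      by_cases hb : 0 < b i
      · rw [hxz ⟨i, hb⟩]; simp
      · exact mul_nonpos_of_nonpos_of_nonneg (le_of_not_gt hb) (sq_nonneg _)
    have hterm : ∀ i ∈ univ, (0:ℝ) ≤ a i * (ext x i) ^ 2 := by
      intro i _
      by_cases ha : 0 < a i
      · positivity
      · show 0 ≤ a i * (if h : 0 < a i then x ⟨i,h⟩ else 0) ^ 2
        rw [dif_neg ha]; simp
    have hlhs0 : ∑ i, a i * (ext x i) ^ 2 = 0 :=
      le_antisymm (h1 ▸ hrhs) (Finset.sum_nonneg hterm)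
    have hzero := (Finset.sum_eq_zero_iff_of_nonneg hterm).mp hlhs0
    funext j
    have := hzero j.1 (Finset.mem_univ _)
    have hj : ext x j.1 = 0 := by
      rcases mul_eq_zero.mp this with h' | h'
      · exact absurd h' (ne_of_gt j.2)
      · exact pow_eq_zero_iff (by norm_num) |>.mp h'
    simpa [ext, dif_pos j.2] using hj
  have := LinearMap.finrank_le_finrank_of_injective hinj
  rw [Module.finrank_pi, Module.finrank_pi] at this
  rwa [Fintype.card_subtype, Fintype.card_subtype] at this

open Matrix Polynomial Finset

lemma charpoly_conj {n : ℕ} (P A : Matrix (Fin n) (Fin n) ℝ) (hP : IsUnit P.det) :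
    (P * A * P⁻¹).charpoly = A.charpoly := by
  have hPP : P * P⁻¹ = 1 := mul_nonsing_inv P hP
  have hdet : P.det * P⁻¹.det = 1 := by
    have := congrArg Matrix.det hPP
    rwa [det_mul, det_one] at this
  have hmapPP : P.map (C : ℝ →+* ℝ[X]) * P⁻¹.map C = 1 := by
    rw [← Matrix.map_mul, hPP]; ext i j; simp [Matrix.one_apply, apply_ite]
  have hchar : charmatrix (P * A * P⁻¹) =
      P.map C * charmatrix A * P⁻¹.map C := by
    unfold charmatrix
    rw [Matrix.mul_sub, Matrix.sub_mul]
    congr 1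
    · have hc := (scalar_commute (X : ℝ[X]) (fun r' => Commute.all _ _) (P⁻¹.map C)).eq
      rw [mul_assoc, hc, ← mul_assoc, hmapPP, one_mul]
    · show (P * A * P⁻¹).map (C : ℝ →+* ℝ[X]) = _
      rw [Matrix.map_mul, Matrix.map_mul]; rfl
  rw [Matrix.charpoly, Matrix.charpoly, hchar, det_mul, det_mul]
  have e1 : (P.map (C : ℝ →+* ℝ[X])).det = C P.det := (RingHom.map_det C P).symm
  have e2 : (P⁻¹.map (C : ℝ →+* ℝ[X])).det = C P⁻¹.det := (RingHom.map_det C P⁻¹).symm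
  rw [show (P.map (⇑(C : ℝ →+* ℝ[X]))).det = C P.det from e1,
    show (P⁻¹.map (⇑(C : ℝ →+* ℝ[X]))).det = C P⁻¹.det from e2]
  rw [mul_comm, ← mul_assoc, ← C_mul, mul_comm P⁻¹.det P.det, hdet]
  simp

lemma charpoly_diag {n : ℕ} (d : Fin n → ℝ) :
    (Matrix.diagonal d).charpoly = ∏ i, (X - C (d i)) := by
  rw [Matrix.charpoly]
  unfold charmatrix
  rw [scalar_apply, RingHom.mapMatrix_apply, Matrix.diagonal_map (by simp),
    Matrix.diagonal_sub, Matrix.det_diagonal]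

lemma roots_charpoly_diag {n : ℕ} (d : Fin n → ℝ) :
    (Matrix.diagonal d).charpoly.roots = (univ.val.map d) := by
  rw [charpoly_diag]
  have : ∏ i, (X - C (d i)) = ((univ.val.map d).map (fun a => X - C a)).prod := by
    rw [Multiset.map_map]; rfl
  rw [this, Polynomial.roots_multiset_prod_X_sub_C]

lemma Lminus_symm (i j : Fin N) : Lminus N ut i j = Lminus N ut j i := by
  unfold Lminus
  by_cases h : i = j
  · subst h; rfl
  · have h' : ¬ j = i := fun hh => h hh.symm
    have he : ((((i : ℕ) : ℤ)) - ((j : ℕ) : ℤ)).natAbs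
        = ((((j : ℕ) : ℤ)) - ((i : ℕ) : ℤ)).natAbs := by omega
    rw [if_neg h, if_neg h', he]

open Matrix Polynomial Finset in
lemma sylv_le' {n : ℕ} (a b : Fin n → ℝ) (Pa Pb : Matrix (Fin n) (Fin n) ℝ)
    (ha : IsUnit Pa.det)
    (h : ∀ v : Fin n → ℝ, ∑ i, a i * (Pa.mulVec v i) ^ 2 = ∑ i, b i * (Pb.mulVec v i) ^ 2) :
    (Finset.univ.filter (fun i => 0 < a i)).card
      ≤ (Finset.univ.filter (fun i => 0 < b i)).card := by
  apply sylv_le a b (Pb * Pa⁻¹)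
  intro x
  have hx := h (Pa⁻¹.mulVec x)
  rw [Matrix.mulVec_mulVec, Matrix.mulVec_mulVec, Matrix.mul_nonsing_inv _ ha,
    Matrix.one_mulVec] at hx
  exact hx

open Matrix Polynomial Finset in
lemma sylv_le_neg' {n : ℕ} (a b : Fin n → ℝ) (Pa Pb : Matrix (Fin n) (Fin n) ℝ)
    (ha : IsUnit Pa.det)
    (h : ∀ v : Fin n → ℝ, ∑ i, a i * (Pa.mulVec v i) ^ 2 = ∑ i, b i * (Pb.mulVec v i) ^ 2) :
    (Finset.univ.filter (fun i => a i < 0)).card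
      ≤ (Finset.univ.filter (fun i => b i < 0)).card := by
  have e1 : Finset.univ.filter (fun i => a i < 0)
      = Finset.univ.filter (fun i => 0 < (-a) i) := by
    apply Finset.filter_congr; intro i _; simp
  have e2 : Finset.univ.filter (fun i => b i < 0)
      = Finset.univ.filter (fun i => 0 < (-b) i) := by
    apply Finset.filter_congr; intro i _; simp
  rw [e1, e2]
  apply sylv_le' (-a) (-b) Pa Pb ha
  intro v
  have := congrArg Neg.neg (h v)
  simpa [neg_mul, ← Finset.sum_neg_distrib] using this

open Matrix Polynomial Finset in
/-- For `ũ ∈ ℝ^N` with all entries nonzero, the matrix `L̃⁻` satisfies `L̃⁻ũ = 0`;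
`0` is a simple root of its characteristic polynomial; it has exactly `N₀(ũ)`
negative eigenvalues and exactly `N − N₀(ũ) − 1` positive eigenvalues, counted with
multiplicity. -/
theorem Lminus_spectrum (N : ℕ) (hN : 1 ≤ N) (ut : Fin N → ℝ)
    (hut : ∀ n, ut n ≠ 0) :
    (Lminus N ut).mulVec ut = 0 ∧
    (Lminus N ut).charpoly.rootMultiplicity 0 = 1 ∧
    (((Lminus N ut).charpoly.roots.filter (fun x => x < 0)).card = nFlips N ut) ∧
    (((Lminus N ut).charpoly.roots.filter (fun x => 0 < x)).card = N - nFlips N ut - 1) := by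
  classical
  -- symmetry
  have hsym : (Lminus N ut).IsHermitian := by
    rw [Matrix.IsHermitian]
    ext i j
    rw [Matrix.conjTranspose_apply, star_trivial]
    exact Lminus_symm N ut j i
  set lam : Fin N → ℝ := hsym.eigenvalues with hlam
  set U : Matrix (Fin N) (Fin N) ℝ := (hsym.eigenvectorUnitary : Matrix (Fin N) (Fin N) ℝ)
    with hU
  have hU1 : star U * U = 1 := Matrix.mem_unitaryGroup_iff'.mp hsym.eigenvectorUnitary.2
  have hU2 : U * star U = 1 := Matrix.mem_unitaryGroup_iff.mp hsym.eigenvectorUnitary.2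
  have hspec : Lminus N ut = U * Matrix.diagonal lam * star U := by
    have h := hsym.spectral_theorem
    have he : (RCLike.ofReal ∘ hsym.eigenvalues : Fin N → ℝ) = lam := by
      funext i
      simp [RCLike.ofReal_real_eq_id]
      rfl
    rwa [he, Unitary.conjStarAlgAut_apply] at h
  have hstar : star U = Uᵀ := by
    rw [Matrix.star_eq_conjTranspose]
    ext i j
    rw [Matrix.conjTranspose_apply, Matrix.transpose_apply, star_trivial]
  have hdetU : IsUnit U.det := by
    apply IsUnit.of_mul_eq_one (b := (star U).det)
    rw [← Matrix.det_mul, hU2, Matrix.det_one]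
  have hdetUt : IsUnit Uᵀ.det := by rwa [Matrix.det_transpose]
  have hdetQ : IsUnit (Qmat N ut).det := Qmat_det_isUnit N ut hut
  have hconjL : Lminus N ut = (Uᵀ)ᵀ * Matrix.diagonal lam * Uᵀ := by
    rw [Matrix.transpose_transpose, ← hstar]
    exact hspec
  have hkey : ∀ v : Fin N → ℝ, ∑ k, lam k * (Uᵀ.mulVec v k) ^ 2
      = ∑ k, cvec N ut k * ((Qmat N ut).mulVec v k) ^ 2 := fun v =>
    (quad_of_conj _ _ _ hconjL v).symm.trans
      (quad_of_conj _ _ _ (Lminus_eq_conj N ut hut) v)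
  -- inertia counts
  have hpos : (Finset.univ.filter (fun i => 0 < lam i)).card
      = (Finset.univ.filter (fun i => 0 < cvec N ut i)).card :=
    le_antisymm (sylv_le' _ _ _ _ hdetUt hkey)
      (sylv_le' _ _ _ _ hdetQ (fun v => (hkey v).symm))
  have hneg : (Finset.univ.filter (fun i => lam i < 0)).card
      = (Finset.univ.filter (fun i => cvec N ut i < 0)).card :=
    le_antisymm (sylv_le_neg' _ _ _ _ hdetUt hkey)
      (sylv_le_neg' _ _ _ _ hdetQ (fun v => (hkey v).symm))
  have tlam := tri_count lam
  have tc := tri_count (cvec N ut)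
  have hcz := cvec_zero_card N ut hN hut
  have hcn := cvec_neg_card N ut
  have hzer : (Finset.univ.filter (fun i => lam i = 0)).card = 1 := by omega
  have hnegval : (Finset.univ.filter (fun i => lam i < 0)).card = nFlips N ut := by omega
  have hposval : (Finset.univ.filter (fun i => 0 < lam i)).card = N - nFlips N ut - 1 := by
    omega
  -- charpoly roots
  have hUinv : U⁻¹ = star U := Matrix.inv_eq_left_inv hU1
  have hcp : (Lminus N ut).charpoly = (Matrix.diagonal lam).charpoly := by
    rw [hspec, ← hUinv]
    exact charpoly_conj U _ hdetU
  have hroots : (Lminus N ut).charpoly.roots = Finset.univ.val.map lam := by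
    rw [hcp, roots_charpoly_diag]
  refine ⟨Lminus_mulVec N ut hut, ?_, ?_, ?_⟩
  · rw [← Polynomial.count_roots, hroots, Multiset.count_map]
    have hflt : Multiset.filter (fun a => 0 = lam a) Finset.univ.val
        = Multiset.filter (fun a => lam a = 0) Finset.univ.val :=
      Multiset.filter_congr (fun x _ => eq_comm)
    rw [hflt, ← Finset.filter_val, ← Finset.card_def]
    exact hzer
  · rw [hroots, ← Multiset.countP_eq_card_filter, Multiset.countP_map,
      ← Finset.filter_val, ← Finset.card_def]
    exact hnegval
  · rw [hroots, ← Multiset.countP_eq_card_filter, Multiset.countP_map,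
      ← Finset.filter_val, ← Finset.card_def]
    exact hposval
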